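/- Let G be a finite simple graph and let e = v_i v_j be a non-pendent edge of G (both d_i ≥ 2 and d_j ≥ 2). Let d_min^(i), d_max^(i) denote the minimum and maximum degree among the neighbors of v_i other than v_j, and similarly d_min^(j), d_max^(j) for v_j. If either (i) max{ d_i/d_min^(i), d_j/d_min^(j) } ≤ 1, or (ii) max{ d_i/d_j, d_j/d_i } ≤ min{ (d_i − 1/2)/d_max^(i), (d_j − 1/2)/d_max^(j) }, then GA(G) > GA(G − e), where G − e is the graph obtained from G by deleting the edge e. -/

import Mathlib

open SimpleGraph

/-- The degree of a vertex, as a natural number (classical, to avoid decidability assumptions). -/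
noncomputable def ndeg {V : Type*} [Fintype V] (G : SimpleGraph V) (v : V) : ℕ :=
  letI := Classical.decRel G.Adj
  G.degree v

/-- The degree of a vertex, as a real number. -/
noncomputable def deg {V : Type*} [Fintype V] (G : SimpleGraph V) (v : V) : ℝ :=
  (ndeg G v : ℝ)

/-- For a symmetric function `f`, `edgeSum G f = Σ_{uv ∈ E(G)} f (d_u) (d_v)`:
each unordered edge is counted twice in the double sum, hence the factor `1/2`. -/
noncomputable def edgeSum {V : Type*} [Fintype V] (G : SimpleGraph V) (f : ℝ → ℝ → ℝ) : ℝ :=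
  letI := Classical.decRel G.Adj
  (1 / 2) * ∑ u : V, ∑ w : V, if G.Adj u w then f (deg G u) (deg G w) else 0

/-- The arithmetic-geometric index `AG(G) = Σ_{uv ∈ E(G)} (1/2)(√(d_u/d_v) + √(d_v/d_u))`. -/
noncomputable def AG {V : Type*} [Fintype V] (G : SimpleGraph V) : ℝ :=
  edgeSum G (fun x y => (Real.sqrt (x / y) + Real.sqrt (y / x)) / 2)

/-- The first geometric-arithmetic index `GA(G) = Σ_{uv ∈ E(G)} 2√(d_u d_v)/(d_u + d_v)`. -/
noncomputable def GA {V : Type*} [Fintype V] (G : SimpleGraph V) : ℝ :=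
  edgeSum G (fun x y => 2 * Real.sqrt (x * y) / (x + y))

/-- The forgotten index `F(G) = Σ_{uv ∈ E(G)} (d_u² + d_v²)`. -/
noncomputable def forgottenIndex {V : Type*} [Fintype V] (G : SimpleGraph V) : ℝ :=
  edgeSum G (fun x y => x ^ 2 + y ^ 2)

/-- The first Zagreb index `M₁(G) = Σ_{uv ∈ E(G)} (d_u + d_v)`. -/
noncomputable def M1 {V : Type*} [Fintype V] (G : SimpleGraph V) : ℝ :=
  edgeSum G (fun x y => x + y)

/-- The second Zagreb index `M₂(G) = Σ_{uv ∈ E(G)} d_u d_v`. -/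
noncomputable def M2 {V : Type*} [Fintype V] (G : SimpleGraph V) : ℝ :=
  edgeSum G (fun x y => x * y)

/-- The symmetric division deg index `SDD(G) = Σ_{uv ∈ E(G)} (d_u/d_v + d_v/d_u)`. -/
noncomputable def SDD {V : Type*} [Fintype V] (G : SimpleGraph V) : ℝ :=
  edgeSum G (fun x y => x / y + y / x)

/-- The atom-bond connectivity index `ABC(G) = Σ_{uv ∈ E(G)} √((d_u + d_v − 2)/(d_u d_v))`. -/
noncomputable def ABC {V : Type*} [Fintype V] (G : SimpleGraph V) : ℝ :=
  edgeSum G (fun x y => Real.sqrt ((x + y - 2) / (x * y)))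

/-- `G` is `(s,r)`-semiregular: its vertex set is the disjoint union of two nonempty sets,
all vertices of the first having degree `s` and all vertices of the second degree `r`. -/
def IsSemiregular {V : Type*} [Fintype V] (G : SimpleGraph V) (s r : ℕ) : Prop :=
  ∃ V₁ V₂ : Set V, V₁.Nonempty ∧ V₂.Nonempty ∧ Disjoint V₁ V₂ ∧ V₁ ∪ V₂ = Set.univ ∧
    (∀ v ∈ V₁, ndeg G v = s) ∧ (∀ v ∈ V₂, ndeg G v = r)

set_option maxHeartbeats 1000000

lemma step2aux (t u m q : ℝ) (ht1 : 1 ≤ t) (hu1 : 1 ≤ u) (hm1 : 1 ≤ m)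
    (hq0 : 0 ≤ q) (hq2 : q^2 = t^2+1/2) (hcm : u^2*m^2 ≤ t^2+1/2) :
    u*t*(t^2+1/2-u^2)*(m^2+1) ≤ m*((t^2+u^2)*((t^2+1)+u^2)) := by
  have ht0 : (0:ℝ) ≤ t := by linarith
  have hu0 : (0:ℝ) ≤ u := by linarith
  have hm0 : (0:ℝ) ≤ m := by linarith
  have hqt : t ≤ q := by nlinarith
  have humq : u*m ≤ q := by nlinarith [sq_nonneg (u*m - q)]
  have huq : u ≤ q := by nlinarith [mul_nonneg hu0 (by linarith : (0:ℝ) ≤ m - 1)]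
  have hu2q : u^2 ≤ q^2 := by nlinarith
  have hBnn : 0 ≤ u*t*(t^2+1/2-u^2) := by
    apply mul_nonneg (mul_nonneg hu0 ht0); nlinarith
  have k0 : 0 ≤ q^4 - u^4 := by nlinarith
  have k1 : t*(q^4-u^4) ≤ q*((q^2+u^2)^2-1/4) := by
    have i1 : t*(q^4-u^4) ≤ q*(q^4-u^4) := mul_le_mul_of_nonneg_right hqt k0
    have i2 : 0 ≤ q*(2*q^2*u^2+2*u^4-1/4) := mul_nonneg hq0 (by nlinarith)
    nlinarith [i1, i2]
  have hend : (u*t*(t^2+1/2-u^2))*(q^2+u^2) ≤ ((t^2+u^2)*((t^2+1)+u^2))*(q*u) := by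
    have hts : t^2 = q^2 - 1/2 := by linarith
    rw [hts]
    calc u*t*(q^2-1/2+1/2-u^2)*(q^2+u^2) = u*(t*(q^4-u^4)) := by ring
      _ ≤ u*(q*((q^2+u^2)^2-1/4)) := mul_le_mul_of_nonneg_left k1 hu0
      _ = ((q^2-1/2+u^2)*((q^2-1/2+1)+u^2))*(q*u) := by ring
  have hch : (m^2+1)*(q*u) ≤ (q^2+u^2)*m := by
    have A1 : 0 ≤ q - u*m := by linarith
    have B1 : 0 ≤ m*q - u := by nlinarith
    nlinarith [mul_nonneg A1 B1]
  have c1 : (u*t*(t^2+1/2-u^2))*((m^2+1)*(q*u)) ≤ (u*t*(t^2+1/2-u^2))*((q^2+u^2)*m) :=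
    mul_le_mul_of_nonneg_left hch hBnn
  have c2 : ((u*t*(t^2+1/2-u^2))*(q^2+u^2))*m ≤ (((t^2+u^2)*((t^2+1)+u^2))*(q*u))*m :=
    mul_le_mul_of_nonneg_right hend hm0
  have hqu : 0 < q*u := by nlinarith
  have c3 : (u*t*(t^2+1/2-u^2)*(m^2+1))*(q*u) ≤ (m*((t^2+u^2)*((t^2+1)+u^2)))*(q*u) := by
    nlinarith [c1, c2]
  exact le_of_mul_le_mul_right c3 hqu

lemma keyPoly (s t u m : ℝ) (hs2 : s^2 = t^2+1) (hs0 : 0 ≤ s)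
    (ht1 : 1 ≤ t) (hu1 : 1 ≤ u) (hm1 : 1 ≤ m)
    (hcm : u^2*m^2 ≤ t^2+1/2) :
    2*u*(s-t)*(s*t-u^2)*((m^2+1)*t^2) < m*((t^2+u^2)*(s^2+u^2)) := by
  have ht0 : (0:ℝ) ≤ t := by linarith
  have hu0 : (0:ℝ) ≤ u := by linarith
  have hm0 : (0:ℝ) ≤ m := by linarith
  have hst : t < s := by nlinarith
  have hRpos : 0 < m*((t^2+u^2)*(s^2+u^2)) := by positivity
  rcases le_or_gt (s*t) (u^2) with hle | hgt
  · have h0 : 2*u*(s-t)*(s*t-u^2)*((m^2+1)*t^2) ≤ 0 := by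
      have : 0 ≤ 2*u*(s-t) := by nlinarith
      have h1 : 2*u*(s-t)*(s*t-u^2) ≤ 0 := mul_nonpos_of_nonneg_of_nonpos this (by linarith)
      have h2 : (0:ℝ) ≤ (m^2+1)*t^2 := by positivity
      exact mul_nonpos_of_nonpos_of_nonneg h1 h2
    linarith
  · have h1 : (s-t)*(2*t) ≤ 1 := by nlinarith [sq_nonneg (s-t)]
    have h2 : s*t < t^2 + 1/2 := by nlinarith [sq_nonneg (s-t)]
    have step1 : 2*u*(s-t)*(s*t-u^2)*((m^2+1)*t^2) < u*t*(t^2+1/2-u^2)*(m^2+1) := by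
      have hA : 2*u*(s-t)*(s*t-u^2)*((m^2+1)*t^2)
          = (u*t*(m^2+1)) * (((s-t)*(2*t)) * (s*t-u^2)) := by ring
      have hB : u*t*(t^2+1/2-u^2)*(m^2+1) = (u*t*(m^2+1)) * (t^2+1/2-u^2) := by ring
      rw [hA, hB]
      apply mul_lt_mul_of_pos_left _
        (mul_pos (mul_pos (by linarith : (0:ℝ) < u) (by linarith : (0:ℝ) < t)) (by positivity))
      calc ((s-t)*(2*t)) * (s*t-u^2) ≤ 1 * (s*t - u^2) :=
            mul_le_mul_of_nonneg_right h1 (by linarith)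
        _ = s*t - u^2 := one_mul _
        _ < t^2+1/2-u^2 := by linarith
    have step2 : u*t*(t^2+1/2-u^2)*(m^2+1) ≤ m*((t^2+u^2)*((t^2+1)+u^2)) :=
      step2aux t u m (Real.sqrt (t^2+1/2)) ht1 hu1 hm1 (Real.sqrt_nonneg _)
        (Real.sq_sqrt (by positivity)) hcm
    have : m*((t^2+u^2)*((t^2+1)+u^2)) = m*((t^2+u^2)*(s^2+u^2)) := by rw [hs2]
    linarith

lemma keyA (a c M : ℝ) (ha : 2 ≤ a) (hc : 1 ≤ c) (hM : 1 ≤ M)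
    (hcM : c * M ≤ a - 1/2) :
    2*Real.sqrt ((a-1)*c)/(a-1+c) - 2*Real.sqrt (a*c)/(a+c)
      < Real.sqrt M / ((M+1)*(a-1)) := by
  have ha0 : (0:ℝ) ≤ a := by linarith
  have ha1 : (0:ℝ) ≤ a - 1 := by linarith
  have hc0 : (0:ℝ) ≤ c := by linarith
  have hM0 : (0:ℝ) ≤ M := by linarith
  set s := Real.sqrt a with hs
  set t := Real.sqrt (a-1) with ht
  set u := Real.sqrt c with hu
  set m := Real.sqrt M with hm
  have hs2 : s^2 = a := Real.sq_sqrt ha0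
  have ht2 : t^2 = a - 1 := Real.sq_sqrt ha1
  have hu2 : u^2 = c := Real.sq_sqrt hc0
  have hm2 : m^2 = M := Real.sq_sqrt hM0
  have hs0 : 0 ≤ s := Real.sqrt_nonneg _
  have ht0 : 0 ≤ t := Real.sqrt_nonneg _
  have hu0 : 0 ≤ u := Real.sqrt_nonneg _
  have hm0 : 0 ≤ m := Real.sqrt_nonneg _
  have ht1 : 1 ≤ t := by nlinarith
  have hu1 : 1 ≤ u := by nlinarith
  have hm1 : 1 ≤ m := by nlinarith
  have e1 : Real.sqrt ((a-1)*c) = t*u := by rw [ht, hu, ← Real.sqrt_mul ha1]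
  have e2 : Real.sqrt (a*c) = s*u := by rw [hs, hu, ← Real.sqrt_mul ha0]
  have hcm : u^2*m^2 ≤ t^2+1/2 := by rw [hu2, hm2]; rw [ht2]; linarith
  have hs2' : s^2 = t^2+1 := by rw [hs2, ht2]; ring
  rw [e1, e2, ← ht2, ← hu2, ← hm2, ← hs2]
  clear_value s t u m
  clear hs ht hu hm hcM hc hM ha hM0 hc0 ha1 ha0 hs2 ht2 hu2 hm2 e1 e2
  have hd1 : (0:ℝ) < t^2 + u^2 := by positivity
  have hd2 : (0:ℝ) < s^2 + u^2 := by positivity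
  have hd3 : (0:ℝ) < (m^2+1)*t^2 := by positivity
  rw [div_sub_div _ _ hd1.ne' hd2.ne', div_lt_div_iff₀ (by positivity) hd3]
  calc (2*(t*u)*(s^2+u^2) - (t^2+u^2)*(2*(s*u))) * ((m^2+1)*t^2)
      = 2*u*(s-t)*(s*t-u^2)*((m^2+1)*t^2) := by ring
    _ < m*((t^2+u^2)*(s^2+u^2)) := keyPoly s t u m hs2' (by positivity) ht1 hu1 hm1 hcm
    _ = m * ((t^2+u^2)*(s^2+u^2)) := by ring


lemma keyB (a c : ℝ) (ha : 2 ≤ a) (hc : a ≤ c) :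
    2*Real.sqrt ((a-1)*c)/(a-1+c) ≤ 2*Real.sqrt (a*c)/(a+c) := by
  have ha0 : (0:ℝ) ≤ a := by linarith
  have ha1 : (0:ℝ) ≤ a - 1 := by linarith
  have hc0 : (0:ℝ) ≤ c := by linarith
  set s := Real.sqrt a with hs
  set t := Real.sqrt (a-1) with ht
  set u := Real.sqrt c with hu
  have hs2 : s^2 = a := Real.sq_sqrt ha0
  have ht2 : t^2 = a - 1 := Real.sq_sqrt ha1
  have hu2 : u^2 = c := Real.sq_sqrt hc0
  have hs0 : 0 ≤ s := Real.sqrt_nonneg _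
  have ht0 : 0 ≤ t := Real.sqrt_nonneg _
  have hu0 : 0 ≤ u := Real.sqrt_nonneg _
  have e1 : Real.sqrt ((a-1)*c) = t*u := by rw [ht, hu, ← Real.sqrt_mul ha1]
  have e2 : Real.sqrt (a*c) = s*u := by rw [hs, hu, ← Real.sqrt_mul ha0]
  have hts : t ≤ s := by nlinarith
  have hsu : s ≤ u := by nlinarith
  rw [e1, e2, ← ht2, ← hu2, ← hs2]
  clear_value s t u
  have hd1 : (0:ℝ) < t^2 + u^2 := by nlinarith
  have hd2 : (0:ℝ) < s^2 + u^2 := by nlinarith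
  rw [div_le_div_iff₀ hd1 hd2]
  nlinarith [mul_nonneg (mul_nonneg hu0 (by linarith : (0:ℝ) ≤ s - t)) (by nlinarith : (0:ℝ) ≤ u^2 - s*t)]

lemma ratioForm (a b : ℝ) (ha : 0 < a) (hb : 0 < b) :
    2*Real.sqrt (b/a)/(b/a+1) = 2*Real.sqrt (a*b)/(a+b) := by
  set u := Real.sqrt a with hu
  set v := Real.sqrt b with hv
  have hu2 : u^2 = a := Real.sq_sqrt ha.le
  have hv2 : v^2 = b := Real.sq_sqrt hb.le
  have hu0 : 0 < u := Real.sqrt_pos.2 ha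
  have hv0 : 0 < v := Real.sqrt_pos.2 hb
  have e : Real.sqrt (b/a) = v/u := by rw [hu, hv, Real.sqrt_div hb.le]
  have em : Real.sqrt (a*b) = u*v := by rw [hu, hv, ← Real.sqrt_mul ha.le]
  rw [e, em, ← hu2, ← hv2]
  have h1 : u^2 ≠ 0 := by positivity
  have h2 : u^2 + v^2 ≠ 0 := by positivity
  have h3 : v^2/u^2 + 1 ≠ 0 := by positivity
  field_simp
  ring

lemma maxRatio (a b : ℝ) (ha : 0 < a) (hb : 0 < b) :
    2*Real.sqrt (a*b)/(a+b) = 2*Real.sqrt (max (a/b) (b/a))/(max (a/b) (b/a) + 1) := by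
  rcases le_total a b with h | h
  · rw [max_eq_right (by rw [div_le_div_iff₀ hb ha]; nlinarith), ratioForm a b ha hb]
  · rw [max_eq_left (by rw [div_le_div_iff₀ ha hb]; nlinarith), ratioForm b a hb ha,
      mul_comm b a, add_comm b a]

set_option maxHeartbeats 2000000 in
theorem stmt18 {V : Type*} [Fintype V] (G : SimpleGraph V) (vi vj : V)
    (he : G.Adj vi vj) (hvi : 2 ≤ ndeg G vi) (hvj : 2 ≤ ndeg G vj)
    (dmini dmaxi dminj dmaxj : ℕ)
    (hdmini : IsLeast {d : ℕ | ∃ u, G.Adj vi u ∧ u ≠ vj ∧ ndeg G u = d} dmini)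
    (hdmaxi : IsGreatest {d : ℕ | ∃ u, G.Adj vi u ∧ u ≠ vj ∧ ndeg G u = d} dmaxi)
    (hdminj : IsLeast {d : ℕ | ∃ u, G.Adj vj u ∧ u ≠ vi ∧ ndeg G u = d} dminj)
    (hdmaxj : IsGreatest {d : ℕ | ∃ u, G.Adj vj u ∧ u ≠ vi ∧ ndeg G u = d} dmaxj)
    (hcond :
      max ((ndeg G vi : ℝ) / (dmini : ℝ)) ((ndeg G vj : ℝ) / (dminj : ℝ)) ≤ 1 ∨
      max ((ndeg G vi : ℝ) / (ndeg G vj : ℝ)) ((ndeg G vj : ℝ) / (ndeg G vi : ℝ)) ≤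
        min (((ndeg G vi : ℝ) - 1 / 2) / (dmaxi : ℝ))
          (((ndeg G vj : ℝ) - 1 / 2) / (dmaxj : ℝ))) :
    GA (G.deleteEdges {s(vi, vj)}) < GA G := by
  classical
  have hne : vi ≠ vj := he.ne
  set H := G.deleteEdges {s(vi, vj)} with hHdef
  -- adjacency in H
  have hadj : ∀ u w, H.Adj u w ↔ G.Adj u w ∧ ¬(u = vi ∧ w = vj) ∧ ¬(u = vj ∧ w = vi) := by
    intro u w
    rw [hHdef, SimpleGraph.deleteEdges_adj, Set.mem_singleton_iff, Sym2.eq_iff]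
    tauto
  -- degrees via filters
  have ndeg_eq : ∀ (G' : SimpleGraph V) (v : V),
      ndeg G' v = (Finset.univ.filter (fun w => G'.Adj v w)).card := by
    intro G' v
    unfold ndeg
    rw [SimpleGraph.degree, SimpleGraph.neighborFinset_eq_filter]
  have hfiltvi : Finset.univ.filter (fun w => G.Adj vi w)
      = insert vj (Finset.univ.filter (fun w => H.Adj vi w)) := by
    ext w
    simp only [Finset.mem_filter, Finset.mem_univ, true_and, Finset.mem_insert, hadj]
    constructor
    · intro hw
      by_cases hwj : w = vj
      · exact Or.inl hwj
      · exact Or.inr ⟨hw, by tauto, by tauto⟩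
    · intro h
      rcases h with rfl | h
      · exact he
      · tauto
  have hfiltvj : Finset.univ.filter (fun w => G.Adj vj w)
      = insert vi (Finset.univ.filter (fun w => H.Adj vj w)) := by
    ext w
    simp only [Finset.mem_filter, Finset.mem_univ, true_and, Finset.mem_insert, hadj]
    constructor
    · intro hw
      by_cases hwi : w = vi
      · exact Or.inl hwi
      · exact Or.inr ⟨hw, by tauto, by tauto⟩
    · intro h
      rcases h with rfl | h
      · exact he.symm
      · tauto
  have hvjnot : vj ∉ Finset.univ.filter (fun w => H.Adj vi w) := by
    simp [hadj]
  have hvinot : vi ∉ Finset.univ.filter (fun w => H.Adj vj w) := by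
    simp [hadj]
  have hdegHi : ndeg G vi = ndeg H vi + 1 := by
    rw [ndeg_eq, ndeg_eq, hfiltvi, Finset.card_insert_of_notMem hvjnot]
    convert rfl
  have hdegHj : ndeg G vj = ndeg H vj + 1 := by
    rw [ndeg_eq, ndeg_eq, hfiltvj, Finset.card_insert_of_notMem hvinot]
    convert rfl
  have hdegH : ∀ v, v ≠ vi → v ≠ vj → ndeg H v = ndeg G v := by
    intro v hv1 hv2
    rw [ndeg_eq, ndeg_eq]
    congr 1
    ext w
    simp only [Finset.mem_filter, Finset.mem_univ, true_and, hadj]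
    constructor
    · exact fun h => h.1
    · intro h
      exact ⟨h, fun hp => hv1 hp.1, fun hp => hv2 hp.1⟩
  -- real degrees
  set a := deg G vi with hadef
  set b := deg G vj with hbdef
  have ha2 : (2:ℝ) ≤ a := by rw [hadef]; unfold deg; exact_mod_cast hvi
  have hb2 : (2:ℝ) ≤ b := by rw [hbdef]; unfold deg; exact_mod_cast hvj
  have dHvi : deg H vi = a - 1 := by
    rw [hadef]; unfold deg; rw [hdegHi]; push_cast; ring
  have dHvj : deg H vj = b - 1 := by
    rw [hbdef]; unfold deg; rw [hdegHj]; push_cast; ring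
  have dHw : ∀ w, w ≠ vi → w ≠ vj → deg H w = deg G w := by
    intro w h1 h2; unfold deg; rw [hdegH w h1 h2]
  -- GA as explicit sum
  set f : ℝ → ℝ → ℝ := fun x y => 2*Real.sqrt (x*y)/(x+y) with hfdef
  have fsymm : ∀ x y, f x y = f y x := by
    intro x y; simp only [hfdef]; rw [mul_comm x y, add_comm x y]
  have gadef : ∀ (G' : SimpleGraph V), GA G'
      = (1/2) * ∑ u : V, ∑ w : V, (if G'.Adj u w then f (deg G' u) (deg G' w) else 0) := by
    intro G'
    unfold GA edgeSum
    congr 1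
  set D : V → V → ℝ := fun u w =>
    (if G.Adj u w then f (deg G u) (deg G w) else 0)
      - (if H.Adj u w then f (deg H u) (deg H w) else 0) with hDdef
  have hdiff : GA G - GA H = (1/2) * ∑ u : V, ∑ w : V, D u w := by
    rw [gadef G, gadef H]
    rw [← mul_sub, ← Finset.sum_sub_distrib]
    congr 1
    apply Finset.sum_congr rfl; intro u _
    rw [← Finset.sum_sub_distrib]
    simp only [hDdef]
    convert rfl
  set E2 : Finset V := (Finset.univ.erase vi).erase vj with hE2def
  have hmemE2 : ∀ w, w ∈ E2 ↔ w ≠ vj ∧ w ≠ vi := by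
    intro w
    simp [hE2def, Finset.mem_erase]
  -- pointwise values of D
  have c0 : ∀ u w, u ≠ vi → u ≠ vj → w ≠ vi → w ≠ vj → D u w = 0 := by
    intro u w hu1 hu2 hw1 hw2
    simp only [hDdef]
    have : H.Adj u w ↔ G.Adj u w := by
      rw [hadj]
      constructor
      · exact fun h => h.1
      · intro h; exact ⟨h, fun hp => hu1 hp.1, fun hp => hu2 hp.1⟩
    rw [if_congr this rfl rfl, dHw u hu1 hu2, dHw w hw1 hw2, sub_self]
  have c1 : ∀ w, w ≠ vi → w ≠ vj →
      D vi w = (if G.Adj vi w then f a (deg G w) - f (a-1) (deg G w) else 0) := by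
    intro w hw1 hw2
    simp only [hDdef]
    have hiff : H.Adj vi w ↔ G.Adj vi w := by
      rw [hadj]
      constructor
      · exact fun h => h.1
      · intro h; exact ⟨h, fun hp => hw2 hp.2, fun hp => hne hp.1⟩
    rw [if_congr hiff rfl rfl, dHvi, dHw w hw1 hw2]
    by_cases hA : G.Adj vi w
    · rw [if_pos hA, if_pos hA, if_pos hA]
    · rw [if_neg hA, if_neg hA, if_neg hA, sub_self]
  have c2 : ∀ w, w ≠ vi → w ≠ vj →
      D vj w = (if G.Adj vj w then f b (deg G w) - f (b-1) (deg G w) else 0) := by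
    intro w hw1 hw2
    simp only [hDdef]
    have hiff : H.Adj vj w ↔ G.Adj vj w := by
      rw [hadj]
      constructor
      · exact fun h => h.1
      · intro h; exact ⟨h, fun hp => hne hp.1.symm, fun hp => hw1 hp.2⟩
    rw [if_congr hiff rfl rfl, dHvj, dHw w hw1 hw2]
    by_cases hA : G.Adj vj w
    · rw [if_pos hA, if_pos hA, if_pos hA]
    · rw [if_neg hA, if_neg hA, if_neg hA, sub_self]
  have c3 : ∀ u, u ≠ vi → u ≠ vj →
      D u vi = (if G.Adj vi u then f a (deg G u) - f (a-1) (deg G u) else 0) := by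
    intro u hu1 hu2
    simp only [hDdef]
    have hiff : H.Adj u vi ↔ G.Adj u vi := by
      rw [hadj]
      constructor
      · exact fun h => h.1
      · intro h; exact ⟨h, fun hp => hu1 hp.1, fun hp => hu2 hp.1⟩
    rw [if_congr hiff rfl rfl, dHvi, dHw u hu1 hu2]
    have hac : G.Adj u vi ↔ G.Adj vi u := ⟨fun h => h.symm, fun h => h.symm⟩
    by_cases hA : G.Adj vi u
    · rw [if_pos (hac.2 hA), if_pos (hac.2 hA), if_pos hA,
        fsymm (deg G u) a, fsymm (deg G u) (a-1)]
    · rw [if_neg (fun h => hA (hac.1 h)), if_neg (fun h => hA (hac.1 h)), if_neg hA, sub_self]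
  have c4 : ∀ u, u ≠ vi → u ≠ vj →
      D u vj = (if G.Adj vj u then f b (deg G u) - f (b-1) (deg G u) else 0) := by
    intro u hu1 hu2
    simp only [hDdef]
    have hiff : H.Adj u vj ↔ G.Adj u vj := by
      rw [hadj]
      constructor
      · exact fun h => h.1
      · intro h; exact ⟨h, fun hp => hu1 hp.1, fun hp => hu2 hp.1⟩
    rw [if_congr hiff rfl rfl, dHvj, dHw u hu1 hu2]
    have hac : G.Adj u vj ↔ G.Adj vj u := ⟨fun h => h.symm, fun h => h.symm⟩
    by_cases hA : G.Adj vj u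
    · rw [if_pos (hac.2 hA), if_pos (hac.2 hA), if_pos hA,
        fsymm (deg G u) b, fsymm (deg G u) (b-1)]
    · rw [if_neg (fun h => hA (hac.1 h)), if_neg (fun h => hA (hac.1 h)), if_neg hA, sub_self]
  have cvivi : D vi vi = 0 := by
    simp only [hDdef]
    rw [if_neg (G.irrefl), if_neg (H.irrefl), sub_self]
  have cvjvj : D vj vj = 0 := by
    simp only [hDdef]
    rw [if_neg (G.irrefl), if_neg (H.irrefl), sub_self]
  have hnadjH : ¬ H.Adj vi vj := by
    rw [hadj]; rintro ⟨-, h2, -⟩; exact h2 ⟨rfl, rfl⟩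
  have hnadjH' : ¬ H.Adj vj vi := by
    rw [hadj]; rintro ⟨-, -, h3⟩; exact h3 ⟨rfl, rfl⟩
  have cvivj : D vi vj = f a b := by
    simp only [hDdef]
    rw [if_pos he, if_neg hnadjH, sub_zero]
  have cvjvi : D vj vi = f a b := by
    simp only [hDdef]
    rw [if_pos he.symm, if_neg hnadjH', sub_zero, fsymm]
  -- sums
  set Ti : ℝ := ∑ w ∈ E2, (if G.Adj vi w then f a (deg G w) - f (a-1) (deg G w) else 0)
    with hTidef
  set Tj : ℝ := ∑ w ∈ E2, (if G.Adj vj w then f b (deg G w) - f (b-1) (deg G w) else 0)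
    with hTjdef
  have hsplit : ∀ g : V → ℝ, ∑ u : V, g u = g vi + (g vj + ∑ u ∈ E2, g u) := by
    intro g
    rw [hE2def, Finset.add_sum_erase _ g
      (Finset.mem_erase.2 ⟨Ne.symm hne, Finset.mem_univ vj⟩),
      Finset.add_sum_erase _ g (Finset.mem_univ vi)]
  have hsum : ∑ u : V, ∑ w : V, D u w = 2*(f a b + Ti + Tj) := by
    rw [hsplit (fun u => ∑ w : V, D u w)]
    have e_vi : ∑ w : V, D vi w = f a b + Ti := by
      rw [hsplit (D vi), cvivi, cvivj, hTidef]
      rw [Finset.sum_congr rfl (fun w hw => c1 w ((hmemE2 w).1 hw).2 ((hmemE2 w).1 hw).1)]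
      ring
    have e_vj : ∑ w : V, D vj w = f a b + Tj := by
      rw [hsplit (D vj), cvjvi, cvjvj, hTjdef]
      rw [Finset.sum_congr rfl (fun w hw => c2 w ((hmemE2 w).1 hw).2 ((hmemE2 w).1 hw).1)]
      ring
    have e_rest : ∑ u ∈ E2, ∑ w : V, D u w = Ti + Tj := by
      have : ∀ u ∈ E2, ∑ w : V, D u w
          = (if G.Adj vi u then f a (deg G u) - f (a-1) (deg G u) else 0)
            + (if G.Adj vj u then f b (deg G u) - f (b-1) (deg G u) else 0) := by
        intro u hu
        obtain ⟨hu2, hu1⟩ := (hmemE2 u).1 hu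
        rw [hsplit (D u), c3 u hu1 hu2, c4 u hu1 hu2]
        have : ∑ w ∈ E2, D u w = 0 := by
          apply Finset.sum_eq_zero
          intro w hw
          obtain ⟨hw2, hw1⟩ := (hmemE2 w).1 hw
          exact c0 u w hu1 hu2 hw1 hw2
        rw [this]
        ring
      rw [Finset.sum_congr rfl this, Finset.sum_add_distrib, hTidef, hTjdef]
    rw [e_vi, e_vj, e_rest]
    ring
  have hdiff2 : GA G - GA H = f a b + Ti + Tj := by
    rw [hdiff, hsum]; ring
  -- positivity of f a b
  have ha0 : (0:ℝ) < a := by linarith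
  have hb0 : (0:ℝ) < b := by linarith
  have hfab : 0 < f a b := by
    simp only [hfdef]
    apply div_pos _ (by linarith)
    have : 0 < Real.sqrt (a*b) := Real.sqrt_pos.2 (by positivity)
    linarith
  -- degree of any neighbor of vi is ≥ 1
  have hnbr1 : ∀ w, G.Adj vi w → 1 ≤ ndeg G w := by
    intro w hw
    rw [ndeg_eq]
    refine Finset.card_pos.2 ⟨vi, ?_⟩
    simp only [Finset.mem_filter, Finset.mem_univ, true_and]
    exact hw.symm
  have hnbr1' : ∀ w, G.Adj vj w → 1 ≤ ndeg G w := by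
    intro w hw
    rw [ndeg_eq]
    refine Finset.card_pos.2 ⟨vj, ?_⟩
    simp only [Finset.mem_filter, Finset.mem_univ, true_and]
    exact hw.symm
  rcases hcond with hcase | hcase
  · -- case (i)
    obtain ⟨u0, hu0a, hu0b, hu0d⟩ := hdmini.1
    have hdmini1 : 1 ≤ dmini := hu0d ▸ hnbr1 u0 hu0a
    obtain ⟨u1, hu1a, hu1b, hu1d⟩ := hdminj.1
    have hdminj1 : 1 ≤ dminj := hu1d ▸ hnbr1' u1 hu1a
    have hai : a ≤ (dmini:ℝ) := by
      have h1 : a / (dmini:ℝ) ≤ 1 := le_trans (le_max_left _ _) hcase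
      have h2 : (0:ℝ) < (dmini:ℝ) := by exact_mod_cast hdmini1
      calc a = (a / dmini) * dmini := by field_simp
        _ ≤ 1 * dmini := mul_le_mul_of_nonneg_right h1 h2.le
        _ = dmini := one_mul _
    have hbj : b ≤ (dminj:ℝ) := by
      have h1 : b / (dminj:ℝ) ≤ 1 := le_trans (le_max_right _ _) hcase
      have h2 : (0:ℝ) < (dminj:ℝ) := by exact_mod_cast hdminj1
      calc b = (b / dminj) * dminj := by field_simp
        _ ≤ 1 * dminj := mul_le_mul_of_nonneg_right h1 h2.le
        _ = dminj := one_mul _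
    have hTi : 0 ≤ Ti := by
      rw [hTidef]
      apply Finset.sum_nonneg
      intro w hw
      obtain ⟨hw2, hw1⟩ := (hmemE2 w).1 hw
      by_cases hA : G.Adj vi w
      · rw [if_pos hA]
        have hmem : ndeg G w ∈ {d : ℕ | ∃ u, G.Adj vi u ∧ u ≠ vj ∧ ndeg G u = d} :=
          ⟨w, hA, hw2, rfl⟩
        have hge : (dmini:ℝ) ≤ deg G w := by
          unfold deg; exact_mod_cast hdmini.2 hmem
        have := keyB a (deg G w) ha2 (le_trans hai hge)
        simp only [hfdef]
        linarith
      · rw [if_neg hA]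
    have hTj : 0 ≤ Tj := by
      rw [hTjdef]
      apply Finset.sum_nonneg
      intro w hw
      obtain ⟨hw2, hw1⟩ := (hmemE2 w).1 hw
      by_cases hA : G.Adj vj w
      · rw [if_pos hA]
        have hmem : ndeg G w ∈ {d : ℕ | ∃ u, G.Adj vj u ∧ u ≠ vi ∧ ndeg G u = d} :=
          ⟨w, hA, hw1, rfl⟩
        have hge : (dminj:ℝ) ≤ deg G w := by
          unfold deg; exact_mod_cast hdminj.2 hmem
        have := keyB b (deg G w) hb2 (le_trans hbj hge)
        simp only [hfdef]
        linarith
      · rw [if_neg hA]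
    linarith [hdiff2, hfab, hTi, hTj]
  · -- case (ii)
    set M : ℝ := max (a/b) (b/a) with hMdef
    have hM1 : 1 ≤ M := by
      rcases le_total a b with h | h
      · exact le_trans (by rw [le_div_iff₀ ha0]; linarith : (1:ℝ) ≤ b/a) (le_max_right _ _)
      · exact le_trans (by rw [le_div_iff₀ hb0]; linarith : (1:ℝ) ≤ a/b) (le_max_left _ _)
    have hM0 : (0:ℝ) < M := by linarith
    obtain ⟨u0, hu0a, hu0b, hu0d⟩ := hdmaxi.1
    have hdmaxi1 : 1 ≤ dmaxi := hu0d ▸ hnbr1 u0 hu0a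
    obtain ⟨u1, hu1a, hu1b, hu1d⟩ := hdmaxj.1
    have hdmaxj1 : 1 ≤ dmaxj := hu1d ▸ hnbr1' u1 hu1a
    have hdmaxi0 : (0:ℝ) < (dmaxi:ℝ) := by exact_mod_cast hdmaxi1
    have hdmaxj0 : (0:ℝ) < (dmaxj:ℝ) := by exact_mod_cast hdmaxj1
    have hMi : M * (dmaxi:ℝ) ≤ a - 1/2 := by
      have h1 : M ≤ (a - 1/2)/(dmaxi:ℝ) := le_trans hcase (min_le_left _ _)
      rw [le_div_iff₀ hdmaxi0] at h1
      linarith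
    have hMj : M * (dmaxj:ℝ) ≤ b - 1/2 := by
      have h1 : M ≤ (b - 1/2)/(dmaxj:ℝ) := le_trans hcase (min_le_right _ _)
      rw [le_div_iff₀ hdmaxj0] at h1
      linarith
    set β : ℝ := Real.sqrt M / ((M+1)*(a-1)) with hβdef
    set γ : ℝ := Real.sqrt M / ((M+1)*(b-1)) with hγdef
    -- neighbor finsets
    set Ni : Finset V := E2.filter (fun w => G.Adj vi w) with hNidef
    set Nj : Finset V := E2.filter (fun w => G.Adj vj w) with hNjdef
    have hNi : Ni = (Finset.univ.filter (fun w => G.Adj vi w)).erase vj := by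
      ext w
      simp only [hNidef, Finset.mem_filter, Finset.mem_erase, Finset.mem_univ, true_and, hmemE2]
      constructor
      · rintro ⟨⟨h1, h2⟩, h3⟩; exact ⟨h1, h3⟩
      · rintro ⟨h1, h3⟩; exact ⟨⟨h1, fun hh => (G.ne_of_adj h3) hh.symm⟩, h3⟩
    have hNj : Nj = (Finset.univ.filter (fun w => G.Adj vj w)).erase vi := by
      ext w
      simp only [hNjdef, Finset.mem_filter, Finset.mem_erase, Finset.mem_univ, true_and, hmemE2]
      constructor
      · rintro ⟨⟨h1, h2⟩, h3⟩; exact ⟨h2, h3⟩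
      · rintro ⟨h2, h3⟩; exact ⟨⟨fun hh => (G.ne_of_adj h3) hh.symm, h2⟩, h3⟩
    have hNicard : Ni.card = ndeg G vi - 1 := by
      rw [hNi, Finset.card_erase_of_mem, ← ndeg_eq]
      simp only [Finset.mem_filter, Finset.mem_univ, true_and]
      exact he
    have hNjcard : Nj.card = ndeg G vj - 1 := by
      rw [hNj, Finset.card_erase_of_mem, ← ndeg_eq]
      simp only [Finset.mem_filter, Finset.mem_univ, true_and]
      exact he.symm
    have hNicardR : (Ni.card : ℝ) = a - 1 := by
      rw [hNicard, hadef]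
      unfold deg
      have : 1 ≤ ndeg G vi := by omega
      push_cast [Nat.cast_sub this]
      ring
    have hNjcardR : (Nj.card : ℝ) = b - 1 := by
      rw [hNjcard, hbdef]
      unfold deg
      have : 1 ≤ ndeg G vj := by omega
      push_cast [Nat.cast_sub this]
      ring
    have hNine : Ni.Nonempty := by
      rw [← Finset.card_pos, hNicard]; omega
    have hNjne : Nj.Nonempty := by
      rw [← Finset.card_pos, hNjcard]; omega
    have hTisum : Ti = ∑ w ∈ Ni, (f a (deg G w) - f (a-1) (deg G w)) := by
      rw [hTidef, hNidef, Finset.sum_filter]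
    have hTjsum : Tj = ∑ w ∈ Nj, (f b (deg G w) - f (b-1) (deg G w)) := by
      rw [hTjdef, hNjdef, Finset.sum_filter]
    have hTibound : -(Real.sqrt M/(M+1)) < Ti := by
      have hstep : ∑ w ∈ Ni, (-β) < ∑ w ∈ Ni, (f a (deg G w) - f (a-1) (deg G w)) := by
        apply Finset.sum_lt_sum_of_nonempty hNine
        intro w hw
        have hAw : G.Adj vi w := (Finset.mem_filter.1 (hNidef ▸ hw)).2
        have hwne : w ≠ vj := ((hmemE2 w).1 (Finset.mem_filter.1 (hNidef ▸ hw)).1).1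
        have hc1 : (1:ℝ) ≤ deg G w := by
          unfold deg; exact_mod_cast hnbr1 w hAw
        have hcmax : deg G w ≤ (dmaxi:ℝ) := by
          unfold deg; exact_mod_cast hdmaxi.2 ⟨w, hAw, hwne, rfl⟩
        have hcM : deg G w * M ≤ a - 1/2 := by
          calc deg G w * M ≤ (dmaxi:ℝ) * M := mul_le_mul_of_nonneg_right hcmax hM0.le
            _ = M * dmaxi := by ring
            _ ≤ a - 1/2 := hMi
        have := keyA a (deg G w) M ha2 hc1 hM1 hcM
        simp only [hfdef, hβdef]
        linarith
      rw [Finset.sum_const, nsmul_eq_mul, hNicardR] at hstep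
      rw [hTisum]
      have hβeq : (a-1) * β = Real.sqrt M/(M+1) := by
        rw [hβdef]
        have h1 : a - 1 ≠ 0 := by linarith
        have h2 : M + 1 ≠ 0 := by linarith
        field_simp
      calc -(Real.sqrt M/(M+1)) = (a-1) * (-β) := by rw [← hβeq]; ring
        _ < _ := hstep
    have hTjbound : -(Real.sqrt M/(M+1)) < Tj := by
      have hM1' : 1 ≤ M := hM1
      have hstep : ∑ w ∈ Nj, (-γ) < ∑ w ∈ Nj, (f b (deg G w) - f (b-1) (deg G w)) := by
        apply Finset.sum_lt_sum_of_nonempty hNjne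
        intro w hw
        have hAw : G.Adj vj w := (Finset.mem_filter.1 (hNjdef ▸ hw)).2
        have hwne : w ≠ vi := ((hmemE2 w).1 (Finset.mem_filter.1 (hNjdef ▸ hw)).1).2
        have hc1 : (1:ℝ) ≤ deg G w := by
          unfold deg; exact_mod_cast hnbr1' w hAw
        have hcmax : deg G w ≤ (dmaxj:ℝ) := by
          unfold deg; exact_mod_cast hdmaxj.2 ⟨w, hAw, hwne, rfl⟩
        have hcM : deg G w * M ≤ b - 1/2 := by
          calc deg G w * M ≤ (dmaxj:ℝ) * M := mul_le_mul_of_nonneg_right hcmax hM0.le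
            _ = M * dmaxj := by ring
            _ ≤ b - 1/2 := hMj
        have := keyA b (deg G w) M hb2 hc1 hM1 hcM
        simp only [hfdef, hγdef]
        linarith
      rw [Finset.sum_const, nsmul_eq_mul, hNjcardR] at hstep
      rw [hTjsum]
      have hγeq : (b-1) * γ = Real.sqrt M/(M+1) := by
        rw [hγdef]
        have h1 : b - 1 ≠ 0 := by linarith
        have h2 : M + 1 ≠ 0 := by linarith
        field_simp
      calc -(Real.sqrt M/(M+1)) = (b-1) * (-γ) := by rw [← hγeq]; ring
        _ < _ := hstep
    have hfabM : f a b = 2*Real.sqrt M/(M+1) := by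
      simp only [hfdef, hMdef]
      rw [maxRatio a b ha0 hb0]
    have : 0 < f a b + Ti + Tj := by
      rw [hfabM]
      have : 2*Real.sqrt M/(M+1) = Real.sqrt M/(M+1) + Real.sqrt M/(M+1) := by ring
      rw [this]
      linarith
    linarith [hdiff2]
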